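/- Let A, u : ℝ × ℝ³ → ℝ³ and ψ : ℝ × ℝ³ → ℝ be C² fields, set B = ∇×A, and suppose the ideal-MHD un-curled Faraday law ∂A/∂t − u×B + ∇ψ = 0 holds (i.e. E = −u×B). Then the magnetic helicity density satisfies the local conservation law ∂(A·B)/∂t + ∇·[ u (A·B) + (ψ − A·u) B ] = 0. -/

import Mathlib

noncomputable section

/-- Vectors in ℝ³. -/
abbrev V3 := Fin 3 → ℝ

/-- Euclidean dot product on ℝ³. -/
def dot3 (a b : V3) : ℝ := a 0 * b 0 + a 1 * b 1 + a 2 * b 2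

/-- Cross product on ℝ³. -/
def cross3 (a b : V3) : V3 :=
  ![a 1 * b 2 - a 2 * b 1, a 2 * b 0 - a 0 * b 2, a 0 * b 1 - a 1 * b 0]

/-- Euclidean norm on ℝ³. -/
def norm3 (a : V3) : ℝ := Real.sqrt (dot3 a a)

/-- Spatial partial derivative of a time-dependent scalar field. -/
def pdS (i : Fin 3) (f : ℝ × V3 → ℝ) (p : ℝ × V3) : ℝ :=
  fderiv ℝ (fun x => f (p.1, x)) p.2 (Pi.single i 1)

/-- Spatial gradient of a time-dependent scalar field. -/
def gradS (f : ℝ × V3 → ℝ) (p : ℝ × V3) : V3 := fun i => pdS i f p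

/-- Spatial divergence of a time-dependent vector field. -/
def divS (F : ℝ × V3 → V3) (p : ℝ × V3) : ℝ :=
  pdS 0 (fun q => F q 0) p + pdS 1 (fun q => F q 1) p + pdS 2 (fun q => F q 2) p

/-- Spatial curl of a time-dependent vector field. -/
def curlS (F : ℝ × V3 → V3) (p : ℝ × V3) : V3 :=
  ![pdS 1 (fun q => F q 2) p - pdS 2 (fun q => F q 1) p,
    pdS 2 (fun q => F q 0) p - pdS 0 (fun q => F q 2) p,
    pdS 0 (fun q => F q 1) p - pdS 1 (fun q => F q 0) p]

/-- Time partial derivative of a scalar field. -/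
def dtS (f : ℝ × V3 → ℝ) (p : ℝ × V3) : ℝ := deriv (fun t => f (t, p.2)) p.1

/-- Time partial derivative of a vector field. -/
def dtV (F : ℝ × V3 → V3) (p : ℝ × V3) : V3 := deriv (fun t => F (t, p.2)) p.1

/-- Fluid shear tensor `σ_ij = ½(∂u_i/∂x_j + ∂u_j/∂x_i) − (1/3) δ_ij ∇·u`. -/
def shearS (u : ℝ × V3 → V3) (p : ℝ × V3) : Fin 3 → Fin 3 → ℝ :=
  fun i j => (1 / 2) * (pdS j (fun q => u q i) p + pdS i (fun q => u q j) p)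
    - (1 / 3) * (if i = j then (1 : ℝ) else 0) * divS u p

/-- Matrix–vector product `(m·v)_i = Σ_j m_ij v_j`. -/
def matVec (m : Fin 3 → Fin 3 → ℝ) (v : V3) : V3 := fun i => ∑ j : Fin 3, m i j * v j

/-- Quadratic form `a·m·b = Σ_{i,j} a_i m_ij b_j`. -/
def quad3 (a : V3) (m : Fin 3 → Fin 3 → ℝ) (b : V3) : ℝ :=
  ∑ i : Fin 3, ∑ j : Fin 3, a i * m i j * b j

/-- Directional derivative `(v·∇)F` in the spatial variables. -/
def dirDS (v : V3) (F : ℝ × V3 → V3) (p : ℝ × V3) : V3 :=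
  fun i => v 0 * pdS 0 (fun q => F q i) p + v 1 * pdS 1 (fun q => F q i) p
    + v 2 * pdS 2 (fun q => F q i) p


section HelicityHelpers

/-- Spatial basis directions in `ℝ × V3`. -/
def eS (i : Fin 3) : ℝ × V3 := (0, Pi.single i 1)

/-- Time direction in `ℝ × V3`. -/
def eT : ℝ × V3 := ((1 : ℝ), (0 : V3))

lemma diff_restr_x {f : ℝ × V3 → ℝ} {p : ℝ × V3} (hf : DifferentiableAt ℝ f p) :
    DifferentiableAt ℝ (fun x => f (p.1, x)) p.2 :=
  hf.comp p.2 ((differentiableAt_const p.1).prodMk differentiableAt_id)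

lemma diff_restr_t {f : ℝ × V3 → ℝ} {p : ℝ × V3} (hf : DifferentiableAt ℝ f p) :
    DifferentiableAt ℝ (fun t => f (t, p.2)) p.1 :=
  hf.comp p.1 (differentiableAt_id.prodMk (differentiableAt_const p.2))

lemma pdS_eq {f : ℝ × V3 → ℝ} {p : ℝ × V3} (hf : DifferentiableAt ℝ f p) (i : Fin 3) :
    pdS i f p = fderiv ℝ f p (eS i) := by
  have h1 : HasFDerivAt (fun x : V3 => (p.1, x)) (ContinuousLinearMap.inr ℝ ℝ V3) p.2 :=
    hasFDerivAt_prodMk_right p.1 p.2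
  have h2 : HasFDerivAt (fun x : V3 => f (p.1, x))
      ((fderiv ℝ f p).comp (ContinuousLinearMap.inr ℝ ℝ V3)) p.2 := hf.hasFDerivAt.comp p.2 h1
  rw [pdS, h2.fderiv]; rfl

lemma dtS_eq {f : ℝ × V3 → ℝ} {p : ℝ × V3} (hf : DifferentiableAt ℝ f p) :
    dtS f p = fderiv ℝ f p eT := by
  have h1 : HasDerivAt (fun t : ℝ => (t, p.2)) eT p.1 := by
    simpa [eT] using (hasDerivAt_id p.1).prodMk (hasDerivAt_const p.1 p.2)
  have h2 : HasDerivAt (fun t : ℝ => f (t, p.2)) (fderiv ℝ f p eT) p.1 :=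
    hf.hasFDerivAt.comp_hasDerivAt p.1 h1
  rw [dtS, h2.deriv]

lemma fderiv_swap {f : ℝ × V3 → ℝ} (hf : ContDiff ℝ 2 f) (p v w : ℝ × V3) :
    fderiv ℝ (fun q => fderiv ℝ f q v) p w = fderiv ℝ (fun q => fderiv ℝ f q w) p v := by
  have hd : ContDiff ℝ 1 (fderiv ℝ f) := hf.fderiv_right (le_refl 2)
  have hdp : DifferentiableAt ℝ (fderiv ℝ f) p := (hd.differentiable one_ne_zero) p
  have key := second_derivative_symmetric (f := f) (f' := fderiv ℝ f)
      (f'' := fderiv ℝ (fderiv ℝ f) p)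
      (fun y => ((hf.differentiable two_ne_zero) y).hasFDerivAt) hdp.hasFDerivAt v w
  have e : ∀ z : ℝ × V3, fderiv ℝ (fun q => fderiv ℝ f q z) p
      = (fderiv ℝ (fderiv ℝ f) p).flip z := by
    intro z
    rw [show (fun q => fderiv ℝ f q z) = fun q => (fderiv ℝ f q) z from rfl,
      fderiv_clm_apply hdp (differentiableAt_const z)]
    simp
  rw [e v, e w]
  simpa using key.symm

lemma contDiff_fderiv_apply {f : ℝ × V3 → ℝ} (hf : ContDiff ℝ 2 f) (v : ℝ × V3) :
    ContDiff ℝ 1 (fun q => fderiv ℝ f q v) :=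
  (hf.fderiv_right (le_refl 2)).clm_apply contDiff_const

lemma pdS_add (i : Fin 3) {f g : ℝ × V3 → ℝ} {p : ℝ × V3}
    (hf : DifferentiableAt ℝ f p) (hg : DifferentiableAt ℝ g p) :
    pdS i (fun q => f q + g q) p = pdS i f p + pdS i g p := by
  unfold pdS
  rw [fderiv_fun_add (diff_restr_x hf) (diff_restr_x hg)]; rfl

lemma pdS_sub (i : Fin 3) {f g : ℝ × V3 → ℝ} {p : ℝ × V3}
    (hf : DifferentiableAt ℝ f p) (hg : DifferentiableAt ℝ g p) :
    pdS i (fun q => f q - g q) p = pdS i f p - pdS i g p := by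
  unfold pdS
  rw [fderiv_fun_sub (diff_restr_x hf) (diff_restr_x hg)]; rfl

lemma pdS_mul (i : Fin 3) {f g : ℝ × V3 → ℝ} {p : ℝ × V3}
    (hf : DifferentiableAt ℝ f p) (hg : DifferentiableAt ℝ g p) :
    pdS i (fun q => f q * g q) p = f p * pdS i g p + g p * pdS i f p := by
  unfold pdS
  rw [fderiv_fun_mul (diff_restr_x hf) (diff_restr_x hg)]
  simp [smul_eq_mul]

lemma dtS_add {f g : ℝ × V3 → ℝ} {p : ℝ × V3}
    (hf : DifferentiableAt ℝ f p) (hg : DifferentiableAt ℝ g p) :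
    dtS (fun q => f q + g q) p = dtS f p + dtS g p := by
  unfold dtS
  exact deriv_add (diff_restr_t hf) (diff_restr_t hg)

lemma dtS_sub {f g : ℝ × V3 → ℝ} {p : ℝ × V3}
    (hf : DifferentiableAt ℝ f p) (hg : DifferentiableAt ℝ g p) :
    dtS (fun q => f q - g q) p = dtS f p - dtS g p := by
  unfold dtS
  exact deriv_sub (diff_restr_t hf) (diff_restr_t hg)

lemma dtS_mul {f g : ℝ × V3 → ℝ} {p : ℝ × V3}
    (hf : DifferentiableAt ℝ f p) (hg : DifferentiableAt ℝ g p) :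
    dtS (fun q => f q * g q) p = f p * dtS g p + g p * dtS f p := by
  unfold dtS
  rw [deriv_fun_mul (diff_restr_t hf) (diff_restr_t hg)]; ring

lemma dtV_apply {F : ℝ × V3 → V3} (hF : ContDiff ℝ 2 F) (q : ℝ × V3) (i : Fin 3) :
    dtV F q i = dtS (fun r => F r i) q := by
  have hc : DifferentiableAt ℝ (fun t => F (t, q.2)) q.1 :=
    ((hF.differentiable two_ne_zero) q).comp q.1
      (differentiableAt_id.prodMk (differentiableAt_const q.2))
  have h2 : HasDerivAt (fun t => F (t, q.2) i) (deriv (fun t => F (t, q.2)) q.1 i) q.1 := by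
    have h3 := (ContinuousLinearMap.proj (R := ℝ) (φ := fun _ : Fin 3 => ℝ)
      i).hasFDerivAt.comp_hasDerivAt q.1 hc.hasDerivAt
    exact h3
  show deriv (fun t => F (t, q.2)) q.1 i = deriv (fun t => F (t, q.2) i) q.1
  exact h2.deriv.symm

end HelicityHelpers

set_option maxHeartbeats 4000000 in
/-- ideal-MHD magnetic helicity conservation law
`∂(A·B)/∂t + ∇·[u(A·B) + (ψ − A·u)B] = 0`. -/
theorem magnetic_helicity_conservation
    (A u : ℝ × V3 → V3) (ψ : ℝ × V3 → ℝ)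
    (hA : ContDiff ℝ 2 A) (hu : ContDiff ℝ 2 u) (hψ : ContDiff ℝ 2 ψ)
    (B : ℝ × V3 → V3) (hB : ∀ p, B p = curlS A p)
    (hFaraday : ∀ p, dtV A p - cross3 (u p) (B p) + gradS ψ p = 0) :
    ∀ p : ℝ × V3,
      dtS (fun q => dot3 (A q) (B q)) p
        + divS (fun q => dot3 (A q) (B q) • u q + (ψ q - dot3 (A q) (u q)) • B q) p
        = 0 := by
  intro p
  have hA1 : ∀ i : Fin 3, ContDiff ℝ 2 (fun q => A q i) := fun i => contDiff_pi.1 hA i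
  have hAd : Differentiable ℝ A := hA.differentiable two_ne_zero
  have hud : Differentiable ℝ u := hu.differentiable two_ne_zero
  have hψd : Differentiable ℝ ψ := hψ.differentiable two_ne_zero
  have hadi : ∀ i : Fin 3, Differentiable ℝ (fun q => A q i) :=
    fun i => (hA1 i).differentiable two_ne_zero
  have hgd : ∀ i j : Fin 3, Differentiable ℝ (fun r => fderiv ℝ (fun r' => A r' i) r (eS j)) :=
    fun i j => (contDiff_fderiv_apply (hA1 i) (eS j)).differentiable one_ne_zero
  have hwd : ∀ i : Fin 3, Differentiable ℝ (fun r => fderiv ℝ ψ r (eS i)) :=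
    fun i => (contDiff_fderiv_apply hψ (eS i)).differentiable one_ne_zero
  have hb0 : ∀ q, B q 0 = (fderiv ℝ (fun r => A r 2) q (eS 1) - fderiv ℝ (fun r => A r 1) q (eS 2)) := by
    intro q
    rw [hB q]
    simp only [curlS, Matrix.cons_val_zero]
    rw [pdS_eq (hadi 2 q) 1, pdS_eq (hadi 1 q) 2]
  have hb1 : ∀ q, B q 1 = (fderiv ℝ (fun r => A r 0) q (eS 2) - fderiv ℝ (fun r => A r 2) q (eS 0)) := by
    intro q
    rw [hB q]
    simp only [curlS, Matrix.cons_val_one, Matrix.head_cons, Matrix.cons_val_zero]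
    rw [pdS_eq (hadi 0 q) 2, pdS_eq (hadi 2 q) 0]
  have hb2 : ∀ q, B q 2 = (fderiv ℝ (fun r => A r 1) q (eS 0) - fderiv ℝ (fun r => A r 0) q (eS 1)) := by
    intro q
    rw [hB q]
    simp only [curlS, Matrix.cons_val_two, Matrix.tail_cons, Matrix.head_cons]
    rw [pdS_eq (hadi 1 q) 0, pdS_eq (hadi 0 q) 1]
  have hFar : ∀ q (i : Fin 3), dtS (fun r => A r i) q = cross3 (u q) (B q) i - gradS ψ q i := by
    intro q i
    have h2 : dtV A q i - cross3 (u q) (B q) i + gradS ψ q i = 0 := congrFun (hFaraday q) i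
    rw [← dtV_apply hA q i]
    linarith
  have hdta0 : ∀ q, dtS (fun r => A r 0) q = u q 1 * (fderiv ℝ (fun r => A r 1) q (eS 0) - fderiv ℝ (fun r => A r 0) q (eS 1)) - u q 2 * (fderiv ℝ (fun r => A r 0) q (eS 2) - fderiv ℝ (fun r => A r 2) q (eS 0)) - fderiv ℝ ψ q (eS 0) := by
    intro q
    rw [hFar q 0]
    simp only [cross3, gradS, Matrix.cons_val_zero]
    rw [hb2 q, hb1 q, pdS_eq (hψd q) 0]
  have hdta1 : ∀ q, dtS (fun r => A r 1) q = u q 2 * (fderiv ℝ (fun r => A r 2) q (eS 1) - fderiv ℝ (fun r => A r 1) q (eS 2)) - u q 0 * (fderiv ℝ (fun r => A r 1) q (eS 0) - fderiv ℝ (fun r => A r 0) q (eS 1)) - fderiv ℝ ψ q (eS 1) := by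
    intro q
    rw [hFar q 1]
    simp only [cross3, gradS, Matrix.cons_val_one, Matrix.head_cons, Matrix.cons_val_zero]
    rw [hb0 q, hb2 q, pdS_eq (hψd q) 1]
  have hdta2 : ∀ q, dtS (fun r => A r 2) q = u q 0 * (fderiv ℝ (fun r => A r 0) q (eS 2) - fderiv ℝ (fun r => A r 2) q (eS 0)) - u q 1 * (fderiv ℝ (fun r => A r 2) q (eS 1) - fderiv ℝ (fun r => A r 1) q (eS 2)) - fderiv ℝ ψ q (eS 2) := by
    intro q
    rw [hFar q 2]
    simp only [cross3, gradS, Matrix.cons_val_two, Matrix.tail_cons, Matrix.head_cons]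
    rw [hb1 q, hb0 q, pdS_eq (hψd q) 2]
  have hRT0 : (fun q => fderiv ℝ (fun r => A r 0) q eT)
      = (fun q => u q 1 * (fderiv ℝ (fun r => A r 1) q (eS 0) - fderiv ℝ (fun r => A r 0) q (eS 1)) - u q 2 * (fderiv ℝ (fun r => A r 0) q (eS 2) - fderiv ℝ (fun r => A r 2) q (eS 0)) - fderiv ℝ ψ q (eS 0)) := by
    funext q
    rw [← dtS_eq (hadi 0 q)]
    exact hdta0 q
  have hdtg0 : ∀ j : Fin 3, dtS (fun q => fderiv ℝ (fun r => A r 0) q (eS j)) p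
      = pdS j (fun q => u q 1 * (fderiv ℝ (fun r => A r 1) q (eS 0) - fderiv ℝ (fun r => A r 0) q (eS 1)) - u q 2 * (fderiv ℝ (fun r => A r 0) q (eS 2) - fderiv ℝ (fun r => A r 2) q (eS 0)) - fderiv ℝ ψ q (eS 0)) p := by
    intro j
    have hd : DifferentiableAt ℝ (fun q => u q 1 * (fderiv ℝ (fun r => A r 1) q (eS 0) - fderiv ℝ (fun r => A r 0) q (eS 1)) - u q 2 * (fderiv ℝ (fun r => A r 0) q (eS 2) - fderiv ℝ (fun r => A r 2) q (eS 0)) - fderiv ℝ ψ q (eS 0)) p := by fun_prop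
    rw [dtS_eq ((hgd 0 j) p), fderiv_swap (hA1 0) p (eS j) eT, hRT0, ← pdS_eq hd j]
  have hRT1 : (fun q => fderiv ℝ (fun r => A r 1) q eT)
      = (fun q => u q 2 * (fderiv ℝ (fun r => A r 2) q (eS 1) - fderiv ℝ (fun r => A r 1) q (eS 2)) - u q 0 * (fderiv ℝ (fun r => A r 1) q (eS 0) - fderiv ℝ (fun r => A r 0) q (eS 1)) - fderiv ℝ ψ q (eS 1)) := by
    funext q
    rw [← dtS_eq (hadi 1 q)]
    exact hdta1 q
  have hdtg1 : ∀ j : Fin 3, dtS (fun q => fderiv ℝ (fun r => A r 1) q (eS j)) p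
      = pdS j (fun q => u q 2 * (fderiv ℝ (fun r => A r 2) q (eS 1) - fderiv ℝ (fun r => A r 1) q (eS 2)) - u q 0 * (fderiv ℝ (fun r => A r 1) q (eS 0) - fderiv ℝ (fun r => A r 0) q (eS 1)) - fderiv ℝ ψ q (eS 1)) p := by
    intro j
    have hd : DifferentiableAt ℝ (fun q => u q 2 * (fderiv ℝ (fun r => A r 2) q (eS 1) - fderiv ℝ (fun r => A r 1) q (eS 2)) - u q 0 * (fderiv ℝ (fun r => A r 1) q (eS 0) - fderiv ℝ (fun r => A r 0) q (eS 1)) - fderiv ℝ ψ q (eS 1)) p := by fun_prop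
    rw [dtS_eq ((hgd 1 j) p), fderiv_swap (hA1 1) p (eS j) eT, hRT1, ← pdS_eq hd j]
  have hRT2 : (fun q => fderiv ℝ (fun r => A r 2) q eT)
      = (fun q => u q 0 * (fderiv ℝ (fun r => A r 0) q (eS 2) - fderiv ℝ (fun r => A r 2) q (eS 0)) - u q 1 * (fderiv ℝ (fun r => A r 2) q (eS 1) - fderiv ℝ (fun r => A r 1) q (eS 2)) - fderiv ℝ ψ q (eS 2)) := by
    funext q
    rw [← dtS_eq (hadi 2 q)]
    exact hdta2 q
  have hdtg2 : ∀ j : Fin 3, dtS (fun q => fderiv ℝ (fun r => A r 2) q (eS j)) p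
      = pdS j (fun q => u q 0 * (fderiv ℝ (fun r => A r 0) q (eS 2) - fderiv ℝ (fun r => A r 2) q (eS 0)) - u q 1 * (fderiv ℝ (fun r => A r 2) q (eS 1) - fderiv ℝ (fun r => A r 1) q (eS 2)) - fderiv ℝ ψ q (eS 2)) p := by
    intro j
    have hd : DifferentiableAt ℝ (fun q => u q 0 * (fderiv ℝ (fun r => A r 0) q (eS 2) - fderiv ℝ (fun r => A r 2) q (eS 0)) - u q 1 * (fderiv ℝ (fun r => A r 2) q (eS 1) - fderiv ℝ (fun r => A r 1) q (eS 2)) - fderiv ℝ ψ q (eS 2)) p := by fun_prop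
    rw [dtS_eq ((hgd 2 j) p), fderiv_swap (hA1 2) p (eS j) eT, hRT2, ← pdS_eq hd j]
  have hsy : ∀ (i : Fin 3) (v w : ℝ × V3),
      fderiv ℝ (fun q => fderiv ℝ (fun r => A r i) q v) p w
        = fderiv ℝ (fun q => fderiv ℝ (fun r => A r i) q w) p v :=
    fun i v w => fderiv_swap (hA1 i) p v w
  have hsp : ∀ (v w : ℝ × V3),
      fderiv ℝ (fun q => fderiv ℝ ψ q v) p w = fderiv ℝ (fun q => fderiv ℝ ψ q w) p v :=
    fun v w => fderiv_swap hψ p v w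
  have hpa : ∀ i j : Fin 3, pdS j (fun r => A r i) p = fderiv ℝ (fun r => A r i) p (eS j) :=
    fun i j => pdS_eq (hadi i p) j
  have hpu : ∀ i j : Fin 3, pdS j (fun r => u r i) p = fderiv ℝ (fun r => u r i) p (eS j) :=
    fun i j => pdS_eq ((contDiff_pi.1 hu i).differentiable two_ne_zero p) j
  have hpψ : ∀ i : Fin 3, pdS i ψ p = fderiv ℝ ψ p (eS i) := fun i => pdS_eq (hψd p) i
  have hpg : ∀ i j l : Fin 3, pdS l (fun q => fderiv ℝ (fun r => A r i) q (eS j)) p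
      = fderiv ℝ (fun q => fderiv ℝ (fun r => A r i) q (eS j)) p (eS l) :=
    fun i j l => pdS_eq ((hgd i j) p) l
  have hpw : ∀ i l : Fin 3, pdS l (fun q => fderiv ℝ ψ q (eS i)) p
      = fderiv ℝ (fun q => fderiv ℝ ψ q (eS i)) p (eS l) :=
    fun i l => pdS_eq ((hwd i) p) l
  simp only [divS, dot3, Pi.add_apply, Pi.smul_apply, smul_eq_mul, hb0, hb1, hb2]
  simp (disch := fun_prop) only [pdS_add, pdS_sub, pdS_mul, dtS_add, dtS_sub, dtS_mul]
  simp only [hdta0, hdta1, hdta2, hdtg0, hdtg1, hdtg2]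
  simp (disch := fun_prop) only [pdS_add, pdS_sub, pdS_mul]
  simp only [hpa, hpu, hpψ, hpg, hpw]
  simp only [hsy 0 (eS 1) (eS 0), hsy 0 (eS 2) (eS 0), hsy 0 (eS 2) (eS 1), hsy 1 (eS 1) (eS 0), hsy 1 (eS 2) (eS 0), hsy 1 (eS 2) (eS 1), hsy 2 (eS 1) (eS 0), hsy 2 (eS 2) (eS 0), hsy 2 (eS 2) (eS 1), hsp (eS 1) (eS 0), hsp (eS 2) (eS 0), hsp (eS 2) (eS 1)]
  ring
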